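/- Let x, y > 0 with (x-1)(y-1) < 0 (an overtaking interaction of a backward shock and a backward rarefaction, in either order). Then the unique B > 0 solving φ←(B) + xy·φ←(B/(xy)) = φ←(x) + x·φ←(y) satisfies B > xy; that is, the outgoing forward wave is always a shock. -/

import Mathlib

open Real Set Filter Topology

/-- κ = √γ / α with α = (γ-1)/2. -/
noncomputable def kappa (γ : ℝ) : ℝ := Real.sqrt γ / ((γ - 1) / 2)

/-- The shock branch x ↦ √((1 - x^{-1/α})(x^{γ/α} - 1)), α = (γ-1)/2. -/
noncomputable def shockPart (γ : ℝ) (x : ℝ) : ℝ :=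
  Real.sqrt ((1 - x ^ (-(1 : ℝ) / ((γ - 1) / 2))) * (x ^ (γ / ((γ - 1) / 2)) - 1))

/-- Backward auxiliary function φ← : rarefaction branch κ(x-1) for x ≤ 1,
    shock branch for x ≥ 1 (they agree, with value 0, at x = 1). -/
noncomputable def phiB (γ : ℝ) (x : ℝ) : ℝ :=
  if x ≤ 1 then kappa γ * (x - 1) else shockPart γ x

/-- Forward auxiliary function φ→ : shock branch -√(...) for x ≤ 1,
    rarefaction branch κ(x-1) for x ≥ 1 (they agree, with value 0, at x = 1). -/
noncomputable def phiF (γ : ℝ) (x : ℝ) : ℝ :=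
  if x < 1 then -shockPart γ x else kappa γ * (x - 1)

namespace OT
noncomputable def ae (γ : ℝ) : ℝ := -(1 : ℝ) / ((γ - 1) / 2)
noncomputable def be (γ : ℝ) : ℝ := γ / ((γ - 1) / 2)
noncomputable def gf (γ t : ℝ) : ℝ := (1 - t ^ ae γ) * (t ^ be γ - 1)

lemma shockPart_eq (γ x : ℝ) : shockPart γ x = Real.sqrt (gf γ x) := rfl

variable {γ : ℝ}

lemma ha_neg (hγ : 1 < γ) : ae γ < 0 := by
  unfold ae; apply div_neg_of_neg_of_pos <;> linarith

lemma hb_pos (hγ : 1 < γ) : 0 < be γ := by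
  unfold be; apply div_pos <;> linarith

lemma hab (hγ : 1 < γ) : ae γ + be γ = 2 := by
  have h : (γ - 1) / 2 ≠ 0 := (show (0:ℝ) < (γ - 1)/2 by linarith).ne'
  unfold ae be
  rw [← add_div, div_eq_iff h]; ring

lemma hk_pos (hγ : 1 < γ) : 0 < kappa γ := by
  unfold kappa; apply div_pos (Real.sqrt_pos.2 (by linarith)); linarith

lemma hk_sq (hγ : 1 < γ) : kappa γ ^ 2 = (-ae γ) * be γ := by
  unfold kappa ae be
  rw [div_pow, Real.sq_sqrt (by linarith : (0:ℝ) ≤ γ)]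
  field_simp

lemma exp_ineq {u v L : ℝ} (hu : 0 < u) (hv : 0 < v) (hL : 0 < L) :
    u * (1 - Real.exp (-(v * L))) < v * (Real.exp (u * L) - 1) := by
  have h1 := Real.add_one_lt_exp (show u * L ≠ 0 by positivity)
  have h2 := Real.add_one_lt_exp (show -(v * L) ≠ 0 by
    simp only [ne_eq, neg_eq_zero]; positivity)
  calc u * (1 - Real.exp (-(v * L))) < u * (v * L) := by nlinarith
    _ = v * (u * L) := by ring
    _ < v * (Real.exp (u * L) - 1) := by nlinarith

-- facts at a point t > 1
lemma hp_pos {t : ℝ} (ht : 0 < t) : 0 < t ^ ae γ := Real.rpow_pos_of_pos ht _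

lemma hp_lt1 (hγ : 1 < γ) {t : ℝ} (ht : 1 < t) : t ^ ae γ < 1 :=
  Real.rpow_lt_one_of_one_lt_of_neg ht (ha_neg hγ)

lemma hq_gt1 (hγ : 1 < γ) {t : ℝ} (ht : 1 < t) : 1 < t ^ be γ :=
  Real.one_lt_rpow_iff_of_pos (by linarith) |>.2 (Or.inl ⟨ht, hb_pos hγ⟩)

lemma hpq (hγ : 1 < γ) {t : ℝ} (ht : 0 < t) : t ^ ae γ * t ^ be γ = t * t := by
  rw [← Real.rpow_add ht, hab hγ]
  rw [show (2:ℝ) = ((2:ℕ):ℝ) by norm_num, Real.rpow_natCast]; ring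

lemma hg_pos (hγ : 1 < γ) {t : ℝ} (ht : 1 < t) : 0 < gf γ t := by
  have := hp_lt1 hγ ht; have := hq_gt1 hγ ht
  unfold gf; nlinarith

-- X > Y
lemma XY (hγ : 1 < γ) {t : ℝ} (ht : 1 < t) :
    (-ae γ) * t ^ ae γ * (t ^ be γ - 1) < be γ * t ^ be γ * (1 - t ^ ae γ) := by
  have ht0 : 0 < t := by linarith
  have hL : 0 < Real.log t := Real.log_pos ht
  have key := exp_ineq (u := -ae γ) (v := be γ) (by linarith [ha_neg hγ]) (hb_pos hγ) hL
  have e1 : Real.exp (-ae γ * Real.log t) = t ^ (-ae γ) := by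
    rw [Real.rpow_def_of_pos ht0]; ring_nf
  have e2 : Real.exp (-(be γ * Real.log t)) = t ^ (-be γ) := by
    rw [Real.rpow_def_of_pos ht0]; ring_nf
  rw [e1, e2] at key
  have hne : t ^ (-ae γ) = (t ^ ae γ)⁻¹ := Real.rpow_neg ht0.le _
  have hnb : t ^ (-be γ) = (t ^ be γ)⁻¹ := Real.rpow_neg ht0.le _
  rw [hne, hnb] at key
  have hp := hp_pos (γ := γ) ht0
  have hq : (0:ℝ) < t ^ be γ := Real.rpow_pos_of_pos ht0 _
  -- multiply key by p*q > 0
  have := mul_lt_mul_of_pos_left key (mul_pos hp hq)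
  calc (-ae γ) * t ^ ae γ * (t ^ be γ - 1)
      = t ^ ae γ * t ^ be γ * (-ae γ * (1 - (t ^ be γ)⁻¹)) := by field_simp
    _ < t ^ ae γ * t ^ be γ * (be γ * ((t ^ ae γ)⁻¹ - 1)) := this
    _ = be γ * t ^ be γ * (1 - t ^ ae γ) := by field_simp

-- b(1-p) < (-a)(q-1)
lemma WW (hγ : 1 < γ) {t : ℝ} (ht : 1 < t) :
    be γ * (1 - t ^ ae γ) < (-ae γ) * (t ^ be γ - 1) := by
  have ht0 : 0 < t := by linarith
  have hL : 0 < Real.log t := Real.log_pos ht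
  have key := exp_ineq (u := be γ) (v := -ae γ) (hb_pos hγ) (by linarith [ha_neg hγ]) hL
  have e1 : Real.exp (be γ * Real.log t) = t ^ be γ := by
    rw [Real.rpow_def_of_pos ht0]; ring_nf
  have e2 : Real.exp (-(-ae γ * Real.log t)) = t ^ ae γ := by
    rw [Real.rpow_def_of_pos ht0]; ring_nf
  rw [e1, e2] at key; linarith

noncomputable def gd (γ t : ℝ) : ℝ :=
  -(ae γ * t ^ (ae γ - 1)) * (t ^ be γ - 1) + (1 - t ^ ae γ) * (be γ * t ^ (be γ - 1))

lemma hasDerivAt_gf {t : ℝ} (ht : 0 < t) : HasDerivAt (gf γ) (gd γ t) t := by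
  have h1 : HasDerivAt (fun s : ℝ => 1 - s ^ ae γ) (-(ae γ * t ^ (ae γ - 1))) t :=
    (Real.hasDerivAt_rpow_const (Or.inl ht.ne')).const_sub 1
  have h2 : HasDerivAt (fun s : ℝ => s ^ be γ - 1) (be γ * t ^ (be γ - 1)) t :=
    (Real.hasDerivAt_rpow_const (Or.inl ht.ne')).sub_const 1
  exact h1.mul h2

lemma tgd (hγ : 1 < γ) {t : ℝ} (ht : 0 < t) :
    t * gd γ t = be γ * t ^ be γ * (1 - t ^ ae γ) + (-ae γ) * t ^ ae γ * (t ^ be γ - 1) := by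
  unfold gd
  rw [Real.rpow_sub ht, Real.rpow_sub ht, Real.rpow_one]
  field_simp; ring

lemma tgd_sub (hγ : 1 < γ) {t : ℝ} (ht : 0 < t) :
    t * gd γ t - 2 * gf γ t = be γ * (1 - t ^ ae γ) + (-ae γ) * (t ^ be γ - 1) := by
  rw [tgd hγ ht]; unfold gf
  have h2 := hab hγ
  linear_combination (1 - t ^ ae γ) * (t ^ be γ - 1) * h2

lemma core_B (hγ : 1 < γ) {t : ℝ} (ht : 1 < t) :
    2 * kappa γ * Real.sqrt (gf γ t) < gd γ t := by
  have ht0 : 0 < t := by linarith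
  set p := t ^ ae γ with hpdef
  set q := t ^ be γ with hqdef
  have hX : 0 < be γ * q * (1 - p) := by
    have := hp_lt1 hγ ht; have := hq_gt1 hγ ht; have := hb_pos hγ
    apply mul_pos (mul_pos ‹0 < be γ› (by linarith)); linarith
  have hY : 0 < (-ae γ) * p * (q - 1) := by
    have := hp_pos (γ := γ) ht0; have := hq_gt1 hγ ht; have := ha_neg hγ
    apply mul_pos (mul_pos (by linarith) ‹0 < p›); linarith
  have hXY := XY hγ ht
  have hgpos := hg_pos hγ ht
  have hs : Real.sqrt (gf γ t) ^ 2 = gf γ t := Real.sq_sqrt hgpos.le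
  have hs0 : 0 ≤ Real.sqrt (gf γ t) := Real.sqrt_nonneg _
  have hk0 := hk_pos hγ
  have hpq' := hpq hγ (γ := γ) ht0
  have hk2 := hk_sq hγ
  -- squares: (2κt√g)² = 4XY < (X+Y)²
  have hsq : (2 * kappa γ * t * Real.sqrt (gf γ t)) ^ 2
      < (be γ * q * (1 - p) + (-ae γ) * p * (q - 1)) ^ 2 := by
    have h4 : (2 * kappa γ * t * Real.sqrt (gf γ t)) ^ 2
        = 4 * (be γ * q * (1 - p)) * ((-ae γ) * p * (q - 1)) := by
      have hgf : gf γ t = (1 - p) * (q - 1) := rfl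
      rw [show (2 * kappa γ * t * Real.sqrt (gf γ t)) ^ 2
          = 4 * kappa γ ^ 2 * (t * t) * Real.sqrt (gf γ t) ^ 2 by ring, hs, hk2, ← hpq', hgf]
      ring
    nlinarith [hXY, hX, hY]
  have h2k : 0 ≤ 2 * kappa γ * t * Real.sqrt (gf γ t) := by positivity
  have hlt := lt_of_pow_lt_pow_left₀ 2 (by linarith : (0:ℝ) ≤ be γ * q * (1 - p) + (-ae γ) * p * (q - 1)) hsq
  rw [← tgd hγ ht0] at hlt
  have : t * (2 * kappa γ * Real.sqrt (gf γ t)) < t * gd γ t := by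
    calc t * (2 * kappa γ * Real.sqrt (gf γ t)) = 2 * kappa γ * t * Real.sqrt (gf γ t) := by ring
      _ < t * gd γ t := hlt
  exact lt_of_mul_lt_mul_left this ht0.le

lemma core_A (hγ : 1 < γ) {t : ℝ} (ht : 1 < t) :
    2 * gf γ t + 2 * kappa γ * Real.sqrt (gf γ t) < t * gd γ t := by
  have ht0 : 0 < t := by linarith
  set p := t ^ ae γ with hpdef
  set q := t ^ be γ with hqdef
  have hU : 0 < be γ * (1 - p) := by
    have := hp_lt1 hγ ht; have := hb_pos hγ; apply mul_pos ‹0 < be γ›; linarith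
  have hV : 0 < (-ae γ) * (q - 1) := by
    have := hq_gt1 hγ ht; have := ha_neg hγ; apply mul_pos (by linarith); linarith
  have hUV := WW hγ ht
  have hgpos := hg_pos hγ ht
  have hs : Real.sqrt (gf γ t) ^ 2 = gf γ t := Real.sq_sqrt hgpos.le
  have hs0 : 0 ≤ Real.sqrt (gf γ t) := Real.sqrt_nonneg _
  have hk0 := hk_pos hγ
  have hk2 := hk_sq hγ
  have hsq : (2 * kappa γ * Real.sqrt (gf γ t)) ^ 2
      < (be γ * (1 - p) + (-ae γ) * (q - 1)) ^ 2 := by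
    have h4 : (2 * kappa γ * Real.sqrt (gf γ t)) ^ 2
        = 4 * (be γ * (1 - p)) * ((-ae γ) * (q - 1)) := by
      have hgf : gf γ t = (1 - p) * (q - 1) := rfl
      rw [show (2 * kappa γ * Real.sqrt (gf γ t)) ^ 2
          = 4 * kappa γ ^ 2 * Real.sqrt (gf γ t) ^ 2 by ring, hs, hk2, hgf]
      ring
    nlinarith [hUV, hU, hV]
  have hlt := lt_of_pow_lt_pow_left₀ 2 (by linarith : (0:ℝ) ≤ be γ * (1 - p) + (-ae γ) * (q - 1)) hsq
  rw [← tgd_sub hγ ht0] at hlt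
  linarith

lemma gf_one : gf γ 1 = 0 := by unfold gf; rw [Real.one_rpow]; ring

lemma cont_gf : ContinuousOn (gf γ) (Ici 1) := by
  have h1 : ContinuousOn (fun t : ℝ => t ^ ae γ) (Ici 1) := fun x hx =>
    (Real.continuousAt_rpow_const x _ (Or.inl (by have : (1:ℝ) ≤ x := hx; positivity))).continuousWithinAt
  have h2 : ContinuousOn (fun t : ℝ => t ^ be γ) (Ici 1) := fun x hx =>
    (Real.continuousAt_rpow_const x _ (Or.inl (by have : (1:ℝ) ≤ x := hx; positivity))).continuousWithinAt
  exact ((continuousOn_const.sub h1).mul (h2.sub continuousOn_const))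

lemma cont_S : ContinuousOn (fun t => Real.sqrt (gf γ t)) (Ici 1) :=
  Real.continuous_sqrt.comp_continuousOn cont_gf

lemma hasDerivAt_S (hγ : 1 < γ) {t : ℝ} (ht : 1 < t) :
    HasDerivAt (fun s => Real.sqrt (gf γ s)) (gd γ t / (2 * Real.sqrt (gf γ t))) t :=
  (hasDerivAt_gf (by linarith)).sqrt (hg_pos hγ ht).ne'

/-- S(t) - κ t strictly increasing on [1,∞) -/
lemma monoB (hγ : 1 < γ) :
    StrictMonoOn (fun t => Real.sqrt (gf γ t) - kappa γ * t) (Ici 1) := by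
  apply strictMonoOn_of_deriv_pos (convex_Ici 1)
  · exact cont_S.sub (continuousOn_const.mul continuousOn_id)
  · intro t ht
    rw [interior_Ici] at ht
    have ht1 : 1 < t := ht
    have hD : HasDerivAt (fun t => Real.sqrt (gf γ t) - kappa γ * t)
        (gd γ t / (2 * Real.sqrt (gf γ t)) - kappa γ) t := by
      exact (hasDerivAt_S hγ ht1).sub ((hasDerivAt_id t).const_mul (kappa γ)) |>.congr_deriv (by ring)
    rw [hD.deriv]
    have hs : 0 < Real.sqrt (gf γ t) := Real.sqrt_pos.2 (hg_pos hγ ht1)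
    have := core_B hγ ht1
    rw [sub_pos, lt_div_iff₀ (by linarith)]
    linarith

/-- (S(t) + κ)/t strictly increasing on [1,∞) -/
lemma monoA (hγ : 1 < γ) :
    StrictMonoOn (fun t => (Real.sqrt (gf γ t) + kappa γ) / t) (Ici 1) := by
  apply strictMonoOn_of_deriv_pos (convex_Ici 1)
  · exact (cont_S.add continuousOn_const).div continuousOn_id
      (fun x hx => by have : (1:ℝ) ≤ x := hx; positivity)
  · intro t ht
    rw [interior_Ici] at ht
    have ht1 : 1 < t := ht
    have ht0 : 0 < t := by linarith
    have hD : HasDerivAt (fun t => (Real.sqrt (gf γ t) + kappa γ) / t)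
        ((gd γ t / (2 * Real.sqrt (gf γ t)) * t - (Real.sqrt (gf γ t) + kappa γ) * 1) / t ^ 2) t :=
      ((hasDerivAt_S hγ ht1).add_const (kappa γ)).div (hasDerivAt_id t) ht0.ne'
    rw [hD.deriv]
    have hs : 0 < Real.sqrt (gf γ t) := Real.sqrt_pos.2 (hg_pos hγ ht1)
    have hcA := core_A hγ ht1
    have hsq : Real.sqrt (gf γ t) ^ 2 = gf γ t := Real.sq_sqrt (hg_pos hγ ht1).le
    apply div_pos _ (by positivity)
    have hnum : (gd γ t / (2 * Real.sqrt (gf γ t)) * t - (Real.sqrt (gf γ t) + kappa γ) * 1)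
        * (2 * Real.sqrt (gf γ t)) = t * gd γ t - (2 * gf γ t + 2 * kappa γ * Real.sqrt (gf γ t)) := by
      field_simp
      nlinarith [hsq]
    nlinarith [hs, hcA, hnum]

lemma S_one : shockPart γ 1 = 0 := by
  rw [shockPart_eq, gf_one, Real.sqrt_zero]

lemma L1 (hγ : 1 < γ) {y : ℝ} (hy : 1 < y) : kappa γ * (y - 1) < shockPart γ y := by
  have := monoB hγ (self_mem_Ici) (show y ∈ Ici (1:ℝ) from hy.le) hy
  simp only [gf_one, Real.sqrt_zero] at this
  rw [shockPart_eq]; linarith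

lemma L2 (hγ : 1 < γ) {u v : ℝ} (hu : 1 ≤ u) (huv : u < v) :
    shockPart γ u + kappa γ * (v - u) < shockPart γ v := by
  have := monoB hγ (show u ∈ Ici (1:ℝ) from hu) (show v ∈ Ici (1:ℝ) by exact (hu.trans huv.le)) huv
  rw [shockPart_eq, shockPart_eq]; dsimp at this; linarith

lemma L3 (hγ : 1 < γ) {u v : ℝ} (hu : 1 ≤ u) (huv : u < v) :
    (shockPart γ u + kappa γ) * v < (shockPart γ v + kappa γ) * u := by
  have hmono := monoA hγ (show u ∈ Ici (1:ℝ) from hu) (show v ∈ Ici (1:ℝ) from hu.trans huv.le) huv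
  dsimp at hmono
  have hu0 : 0 < u := by linarith
  have hv0 : 0 < v := by linarith
  rw [div_lt_div_iff₀ hu0 hv0] at hmono
  rw [shockPart_eq, shockPart_eq]; linarith


lemma phiB_one : phiB γ 1 = 0 := by simp [phiB]

lemma phiB_nonpos (hγ : 1 < γ) {x : ℝ} (hx : x ≤ 1) : phiB γ x ≤ 0 := by
  rw [phiB, if_pos hx]
  have := hk_pos hγ; nlinarith

lemma S_nonneg (γ x : ℝ) : 0 ≤ shockPart γ x := Real.sqrt_nonneg _

lemma phiB_mono (hγ : 1 < γ) {s t : ℝ} (hs : 0 < s) (hst : s ≤ t) : phiB γ s ≤ phiB γ t := by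
  rcases eq_or_lt_of_le hst with rfl | hlt
  · exact le_rfl
  rcases le_or_gt t 1 with ht1 | ht1
  · rw [phiB, if_pos (hst.trans ht1), phiB, if_pos ht1]
    have := hk_pos hγ; nlinarith
  · have htS : phiB γ t = shockPart γ t := by rw [phiB, if_neg (not_le.2 ht1)]
    rw [htS]
    rcases le_or_gt s 1 with hs1 | hs1
    · exact (phiB_nonpos hγ hs1).trans (S_nonneg γ t)
    · have hsS : phiB γ s = shockPart γ s := by rw [phiB, if_neg (not_le.2 hs1)]
      rw [hsS]
      have := L2 hγ hs1.le hlt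
      have := hk_pos hγ
      nlinarith

/-- key interaction inequality -/
lemma key (hγ : 1 < γ) {x y : ℝ} (hx : 0 < x) (hy : 0 < y) (hxy : (x - 1) * (y - 1) < 0) :
    phiB γ (x * y) < phiB γ x + x * phiB γ y := by
  have hk0 := hk_pos hγ
  rcases mul_neg_iff.1 hxy with ⟨h1, h2⟩ | ⟨h1, h2⟩
  · -- x > 1, y < 1
    have hx1 : 1 < x := by linarith
    have hy1 : y < 1 := by linarith
    rw [show phiB γ x = shockPart γ x by rw [phiB, if_neg (not_le.2 hx1)],
        show phiB γ y = kappa γ * (y - 1) by rw [phiB, if_pos hy1.le]]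
    rcases le_or_gt (x * y) 1 with hxy1 | hxy1
    · rw [phiB, if_pos hxy1]
      have := L1 hγ hx1
      nlinarith
    · rw [phiB, if_neg (not_le.2 hxy1)]
      have hlt : x * y < x := by nlinarith
      have := L2 hγ hxy1.le hlt
      nlinarith
  · -- x < 1, y > 1
    have hx1 : x < 1 := by linarith
    have hy1 : 1 < y := by linarith
    rw [show phiB γ x = kappa γ * (x - 1) by rw [phiB, if_pos hx1.le],
        show phiB γ y = shockPart γ y by rw [phiB, if_neg (not_le.2 hy1)]]
    rcases le_or_gt (x * y) 1 with hxy1 | hxy1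
    · rw [phiB, if_pos hxy1]
      have := L1 hγ hy1
      nlinarith
    · rw [phiB, if_neg (not_le.2 hxy1)]
      have hlt : x * y < y := by nlinarith
      have h3 := L3 hγ hxy1.le hlt
      have hy0 : 0 < y := by linarith
      have : (shockPart γ (x * y) + kappa γ) * y < ((shockPart γ y + kappa γ) * x) * y := by
        calc (shockPart γ (x * y) + kappa γ) * y < (shockPart γ y + kappa γ) * (x * y) := h3
          _ = ((shockPart γ y + kappa γ) * x) * y := by ring
      have := lt_of_mul_lt_mul_right this hy0.le
      nlinarith
end OT

/-- for an overtaking interaction of a backward shock and a backward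
    rarefaction (in either order, i.e. (x-1)(y-1) < 0), the outgoing forward wave
    is always a shock (B > xy). -/
theorem overtaking_SR_forward_shock (γ : ℝ) (hγ : 1 < γ)
    (x y B : ℝ) (hx : 0 < x) (hy : 0 < y) (hxy : (x - 1) * (y - 1) < 0) (hB : 0 < B)
    (heq : phiB γ B + x * y * phiB γ (B / (x * y)) = phiB γ x + x * phiB γ y) :
    x * y < B := by
  by_contra h
  push_neg at h  -- B ≤ x * y
  have hc0 : 0 < x * y := mul_pos hx hy
  have hkey := OT.key hγ hx hy hxy
  have h1 : phiB γ B ≤ phiB γ (x * y) := OT.phiB_mono hγ hB h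
  have h2 : phiB γ (B / (x * y)) ≤ 0 := by
    apply OT.phiB_nonpos hγ
    rw [div_le_one hc0]; exact h
  nlinarith [heq, h1, h2, hkey, mul_nonpos_of_nonneg_of_nonpos hc0.le h2]
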